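/- Let A_1,...,A_k be m-by-n real matrices, b_1,...,b_k vectors in R^m, and delta > 0. Given any x0 in R^n, define weights w_i := 1 / ( ||b_i - A_i x0||_2 + delta ) for i = 1,...,k, and let x' be a minimizer over x in R^n of sum_{i=1}^k w_i ||b_i - A_i x||_2. Then the concave surrogate objective does not increase: sum_{i=1}^k log( ||b_i - A_i x'||_2 + delta ) <= sum_{i=1}^k log( ||b_i - A_i x0||_2 + delta ). -/

import Mathlib

/-- Euclidean norm of a vector in `ℝ^m`. -/
noncomputable def euclNorm {m : ℕ} (v : Fin m → ℝ) : ℝ :=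
  Real.sqrt (∑ j, v j ^ 2)

/-- descent property of the MM iteration (P2a): if `x'` minimizes
the weighted cost `x ↦ ∑ᵢ wᵢ ‖bᵢ - Aᵢ x‖₂` with weights
`wᵢ = 1/(‖bᵢ - Aᵢ x0‖₂ + δ)`, then the concave surrogate objective does not
increase: `∑ᵢ log(‖bᵢ - Aᵢ x'‖₂ + δ) ≤ ∑ᵢ log(‖bᵢ - Aᵢ x0‖₂ + δ)`. -/
theorem MM_descent_property {k m n : ℕ}
    (A : Fin k → Matrix (Fin m) (Fin n) ℝ) (b : Fin k → Fin m → ℝ)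
    (δ : ℝ) (hδ : 0 < δ) (x0 x' : Fin n → ℝ)
    (hmin : ∀ x : Fin n → ℝ,
      ∑ i, (1 / (euclNorm (b i - (A i).mulVec x0) + δ))
          * euclNorm (b i - (A i).mulVec x')
        ≤ ∑ i, (1 / (euclNorm (b i - (A i).mulVec x0) + δ))
          * euclNorm (b i - (A i).mulVec x)) :
    ∑ i, Real.log (euclNorm (b i - (A i).mulVec x') + δ)
      ≤ ∑ i, Real.log (euclNorm (b i - (A i).mulVec x0) + δ) := by
  have hnn : ∀ (v : Fin m → ℝ), 0 ≤ euclNorm v := fun v => Real.sqrt_nonneg _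
  let r0 : Fin k → ℝ := fun i => euclNorm (b i - (A i).mulVec x0)
  let r1 : Fin k → ℝ := fun i => euclNorm (b i - (A i).mulVec x')
  have hpos0 : ∀ i, 0 < r0 i + δ := fun i => by
    have := hnn (b i - (A i).mulVec x0); simp only [r0]; linarith
  have hpos1 : ∀ i, 0 < r1 i + δ := fun i => by
    have := hnn (b i - (A i).mulVec x'); simp only [r1]; linarith
  have key : ∀ i, Real.log (r1 i + δ) - Real.log (r0 i + δ)
      ≤ (1 / (r0 i + δ)) * r1 i - (1 / (r0 i + δ)) * r0 i := by
    intro i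
    have h1 : Real.log ((r1 i + δ) / (r0 i + δ)) ≤ (r1 i + δ) / (r0 i + δ) - 1 :=
      Real.log_le_sub_one_of_pos (div_pos (hpos1 i) (hpos0 i))
    rw [Real.log_div (hpos1 i).ne' (hpos0 i).ne'] at h1
    have h2 : (r1 i + δ) / (r0 i + δ) - 1
        = (1 / (r0 i + δ)) * r1 i - (1 / (r0 i + δ)) * r0 i := by
      have h3 : r0 i + δ ≠ 0 := (hpos0 i).ne'
      field_simp
      ring
    linarith [h2 ▸ h1]
  have hsum : ∑ i, Real.log (r1 i + δ) - ∑ i, Real.log (r0 i + δ)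
      ≤ ∑ i, (1 / (r0 i + δ)) * r1 i - ∑ i, (1 / (r0 i + δ)) * r0 i := by
    rw [← Finset.sum_sub_distrib, ← Finset.sum_sub_distrib]
    exact Finset.sum_le_sum fun i _ => key i
  have hmin0 : ∑ i, (1 / (r0 i + δ)) * r1 i ≤ ∑ i, (1 / (r0 i + δ)) * r0 i := hmin x0
  show ∑ i, Real.log (r1 i + δ) ≤ ∑ i, Real.log (r0 i + δ)
  linarith
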